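/- Let Θ = diag(Θ₁,…,Θₙ) be a diagonal n×n matrix with Θⱼ > 0 for all j, and let A be a real m×n matrix with m ≤ n/2. Set ρ = m/n, H = Θ⁻¹ + AᵀA and P = Θ⁻¹ + ρ Iₙ. Let C > 0 be any constant, let l = #{j : Θⱼ⁻¹ < C}, and suppose there exists 0 < δ_l < 1 such that every m×l submatrix B formed of l distinct columns of A satisfies ‖(n/m)·BᵀB − I_l‖₂ ≤ δ_l. If the rows of A are nearly orthonormal, i.e. ‖AAᵀ − I_m‖₂ ≤ δ for some δ ≥ 0, then every eigenvalue λ of P⁻¹H satisfies |λ − 1| ≤ δ_l + (1/4)·(1 + δ − ρ + 2√(1+δ))²/(ρ δ_l C). -/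

import Mathlib

set_option maxHeartbeats 1000000


open scoped BigOperators Matrix.Norms.L2Operator
open Matrix

lemma dot_self_nonneg' {k : ℕ} (x : Fin k → ℝ) : 0 ≤ x ⬝ᵥ x :=
  Finset.sum_nonneg fun _ _ => mul_self_nonneg _

lemma euc_norm_eq {k : ℕ} (x : Fin k → ℝ) :
    ‖(EuclideanSpace.equiv (Fin k) ℝ).symm x‖ = Real.sqrt (x ⬝ᵥ x) := by
  rw [EuclideanSpace.norm_eq]
  congr 1
  simp [dotProduct, Real.norm_eq_abs, sq_abs, sq]

lemma dot_cauchy {k : ℕ} (x y : Fin k → ℝ) :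
    |x ⬝ᵥ y| ≤ Real.sqrt (x ⬝ᵥ x) * Real.sqrt (y ⬝ᵥ y) := by
  have h := abs_real_inner_le_norm ((EuclideanSpace.equiv (Fin k) ℝ).symm x)
    ((EuclideanSpace.equiv (Fin k) ℝ).symm y)
  rw [euc_norm_eq, euc_norm_eq] at h
  have : (inner ℝ ((EuclideanSpace.equiv (Fin k) ℝ).symm x)
      ((EuclideanSpace.equiv (Fin k) ℝ).symm y) : ℝ) = x ⬝ᵥ y := by
    simp [PiLp.inner_apply, dotProduct, mul_comm]
  rwa [this] at h

lemma mulVec_dot_le {a b : ℕ} (M : Matrix (Fin a) (Fin b) ℝ) (x : Fin b → ℝ) :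
    Real.sqrt ((M.mulVec x) ⬝ᵥ (M.mulVec x)) ≤ ‖M‖ * Real.sqrt (x ⬝ᵥ x) := by
  have h := M.l2_opNorm_mulVec ((EuclideanSpace.equiv (Fin b) ℝ).symm x)
  rwa [euc_norm_eq, euc_norm_eq] at h

lemma quad_bound {k : ℕ} (M : Matrix (Fin k) (Fin k) ℝ) {c : ℝ} (hc : ‖M‖ ≤ c)
    (x : Fin k → ℝ) : |x ⬝ᵥ M.mulVec x| ≤ c * (x ⬝ᵥ x) := by
  have h1 := dot_cauchy x (M.mulVec x)
  have h2 := mulVec_dot_le M x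
  have hx : 0 ≤ Real.sqrt (x ⬝ᵥ x) := Real.sqrt_nonneg _
  have hM : 0 ≤ ‖M‖ := norm_nonneg _
  have hs : Real.sqrt (x ⬝ᵥ x) * Real.sqrt (x ⬝ᵥ x) = x ⬝ᵥ x :=
    Real.mul_self_sqrt (dot_self_nonneg' x)
  nlinarith [mul_le_mul_of_nonneg_left h2 hx]

lemma key_quadratic (ρ δl C s L Q α β : ℝ)
    (hρ0 : 0 < ρ) (hρ2 : ρ ≤ 1/2) (hδl0 : 0 < δl) (hδl1 : δl ≤ 1) (hC : 0 < C)
    (hs : 1 ≤ s) (hL : 1/2 ≤ L) (hα : 0 ≤ α) (hβ : 0 ≤ β)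
    (hQ : Q * (ρ * δl * C) = (L + 2*s)^2 / 4) :
    ρ*δl*α^2 + 2*s*α*β + L*β^2 ≤ (δl + Q) * (ρ*α^2 + C*β^2) := by
  have hpos : 0 < ρ * δl * C := by positivity
  have hQ0 : 0 ≤ Q := by nlinarith [sq_nonneg (L + 2*s)]
  have hρδl : ρ * δl ≤ 1/2 := by nlinarith
  have hQC : L ≤ Q * C := by
    have h1 : (Q * C) * (ρ * δl) = (L + 2*s)^2 / 4 := by
      rw [← hQ]; ring
    have h2 : L * (ρ * δl) ≤ (L + 2*s)^2 / 4 := by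
      nlinarith [sq_nonneg (L - 2*s), mul_le_mul_of_nonneg_left hρδl (by linarith : (0:ℝ) ≤ L)]
    have h3 := mul_pos hρ0 hδl0
    nlinarith
  set K : ℝ := δl * C + Q * C - L with hK
  have hKpos : 0 < K := by nlinarith [mul_pos hδl0 hC]
  have hKQρ : s^2 ≤ K * (Q * ρ) := by nlinarith [mul_nonneg hQ0 hρ0.le, sq_nonneg L]
  have hmain : 0 ≤ K * β^2 - 2*s*α*β + Q*ρ*α^2 := by
    have h2 : 0 ≤ (K*β - s*α)^2 + (K*(Q*ρ) - s^2) * α^2 := by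
      have := sq_nonneg α
      nlinarith
    nlinarith [sq_nonneg (K*β - s*α), hKpos]
  nlinarith


lemma dot_transpose_mul {a b : ℕ} (M : Matrix (Fin a) (Fin b) ℝ) (w z : Fin b → ℝ) :
    w ⬝ᵥ (Mᵀ * M).mulVec z = (M.mulVec w) ⬝ᵥ (M.mulVec z) := by
  rw [← Matrix.mulVec_mulVec, Matrix.dotProduct_mulVec, Matrix.vecMul_transpose]

/-- Property P2: every `m × k` submatrix `B` formed of `k` distinct columns of `A`
satisfies `‖(n/m)·BᵀB − I_k‖₂ ≤ δ` (the norm is the spectral norm). -/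
def PropP2 (m n k : ℕ) (A : Matrix (Fin m) (Fin n) ℝ) (δ : ℝ) : Prop :=
  ∀ g : Fin k → Fin n, Function.Injective g →
    ‖((n : ℝ) / m) • ((A.submatrix id g)ᵀ * (A.submatrix id g)) - 1‖ ≤ δ

/-- Eigenvalue clustering of the preconditioned matrix `P⁻¹H` around 1
when the rows of `A` are nearly orthonormal (property P1: `‖AAᵀ − I_m‖₂ ≤ δ`),
where `H = Θ⁻¹ + AᵀA` and `P = Θ⁻¹ + ρ Iₙ`, `ρ = m/n`. -/
theorem eigenvalue_clustering_nearly_orthonormal_rows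
    (m n : ℕ) (hmn : 2 * m ≤ n)
    (d : Fin n → ℝ) (hd : ∀ j, 0 < d j)
    (A : Matrix (Fin m) (Fin n) ℝ)
    (C : ℝ) (hC : 0 < C)
    (l : ℕ) (hl : l = (Finset.univ.filter fun j => (d j)⁻¹ < C).card)
    (δl : ℝ) (hδl0 : 0 < δl) (hδl1 : δl < 1)
    (hP2 : PropP2 m n l A δl)
    (δ : ℝ) (hδ : 0 ≤ δ)
    (hP1 : ‖A * Aᵀ - 1‖ ≤ δ) :
    ∀ lam : ℝ,
      (∃ v : Fin n → ℝ, v ≠ 0 ∧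
        ((Matrix.diagonal (fun j => (d j)⁻¹) + ((m : ℝ) / n) • (1 : Matrix (Fin n) (Fin n) ℝ))⁻¹
          * (Matrix.diagonal (fun j => (d j)⁻¹) + Aᵀ * A)).mulVec v = lam • v) →
      |lam - 1| ≤ δl + (1 / 4) * (1 + δ - (m : ℝ) / n + 2 * Real.sqrt (1 + δ)) ^ 2
        / (((m : ℝ) / n) * δl * C) := by
  rintro lam ⟨v, hv0, hveq⟩
  set ρ : ℝ := (m : ℝ) / n with hρdef
  have hρ0 : 0 ≤ ρ := by positivity
  set Pd : Fin n → ℝ := fun j => (d j)⁻¹ + ρ with hPddef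
  have hPdpos : ∀ j, 0 < Pd j := fun j => add_pos_of_pos_of_nonneg (inv_pos.2 (hd j)) hρ0
  set P : Matrix (Fin n) (Fin n) ℝ := Matrix.diagonal Pd with hPdef
  set H : Matrix (Fin n) (Fin n) ℝ := Matrix.diagonal (fun j => (d j)⁻¹) + Aᵀ * A with hHdef
  have hPdiag : Matrix.diagonal (fun j => (d j)⁻¹) + ρ • (1 : Matrix (Fin n) (Fin n) ℝ) = P := by
    rw [Matrix.smul_one_eq_diagonal, Matrix.diagonal_add]
  have hPinvP : Matrix.diagonal (fun j => (Pd j)⁻¹) * P = 1 := by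
    rw [hPdef, Matrix.diagonal_mul_diagonal]
    have : (fun j => (Pd j)⁻¹ * Pd j) = fun _ => (1:ℝ) :=
      funext fun j => inv_mul_cancel₀ (hPdpos j).ne'
    rw [this, Matrix.diagonal_one]
  have hPinv : P⁻¹ = Matrix.diagonal (fun j => (Pd j)⁻¹) := Matrix.inv_eq_left_inv hPinvP
  have hPPinv : P * P⁻¹ = 1 := by
    rw [hPinv, hPdef, Matrix.diagonal_mul_diagonal]
    have : (fun j => Pd j * (Pd j)⁻¹) = fun _ => (1:ℝ) :=
      funext fun j => mul_inv_cancel₀ (hPdpos j).ne'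
    rw [this, Matrix.diagonal_one]
  -- the eigen-equation in P,H form
  have hHv : H.mulVec v = lam • P.mulVec v := by
    rw [hPdiag] at hveq
    have h1 := congrArg (P.mulVec) hveq
    rw [Matrix.mulVec_mulVec, ← mul_assoc, hPPinv, one_mul, Matrix.mulVec_smul] at h1
    exact h1
  -- scalar quantities
  set den : ℝ := v ⬝ᵥ P.mulVec v with hdendef
  have hden_sum : den = ∑ j, Pd j * (v j * v j) := by
    rw [hdendef, hPdef]
    simp only [dotProduct, Matrix.mulVec_diagonal]
    exact Finset.sum_congr rfl fun j _ => by ring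
  have hdenpos : 0 < den := by
    rw [hden_sum]
    obtain ⟨j0, hj0⟩ := Function.ne_iff.mp hv0
    have hj0' : v j0 ≠ 0 := by simpa using hj0
    refine Finset.sum_pos' (fun j _ => mul_nonneg (hPdpos j).le (mul_self_nonneg _))
      ⟨j0, Finset.mem_univ _, mul_pos (hPdpos j0) (mul_self_pos.mpr hj0')⟩
  have hdot : v ⬝ᵥ H.mulVec v = lam * den := by
    rw [hHv, dotProduct_smul, smul_eq_mul, hdendef]
  have hHsplit : H = P + (Aᵀ * A - ρ • (1 : Matrix (Fin n) (Fin n) ℝ)) := by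
    rw [hHdef, ← hPdiag]; abel
  have hNsplit : v ⬝ᵥ H.mulVec v = den + ((A.mulVec v) ⬝ᵥ (A.mulVec v) - ρ * (v ⬝ᵥ v)) := by
    rw [hHsplit, Matrix.add_mulVec, dotProduct_add, Matrix.sub_mulVec,
      dotProduct_sub, dot_transpose_mul, Matrix.smul_mulVec, Matrix.one_mulVec,
      dotProduct_smul, smul_eq_mul, ← hdendef]
  have hNden : (lam - 1) * den = (A.mulVec v) ⬝ᵥ (A.mulVec v) - ρ * (v ⬝ᵥ v) := by
    have h := hdot; rw [hNsplit] at h; linarith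
  rcases Nat.eq_zero_or_pos m with hm0 | hm
  · -- degenerate case m = 0 : lam = 1
    have hAv0 : (A.mulVec v) ⬝ᵥ (A.mulVec v) = 0 := by
      subst hm0
      simp [dotProduct]
    have hρz : ρ = 0 := by subst hm0; simp [hρdef]
    have hlam : lam = 1 := by
      have h0 : (lam - 1) * den = 0 := by rw [hNden, hAv0, hρz]; ring
      rcases mul_eq_zero.mp h0 with h | h
      · linarith
      · exact absurd h hdenpos.ne'
    rw [hlam]
    simp only [hρz, zero_mul, div_zero, sub_self, abs_zero, add_zero]
    linarith
  -- main case : 0 < m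
  have hn : 0 < n := by omega
  have hρpos : 0 < ρ := div_pos (by exact_mod_cast hm) (by exact_mod_cast hn)
  have hρhalf : ρ ≤ 1/2 := by
    rw [hρdef, div_le_iff₀ (by exact_mod_cast hn)]
    have : (2*m : ℝ) ≤ n := by exact_mod_cast hmn
    linarith
  set S := Finset.univ.filter (fun j : Fin n => (d j)⁻¹ < C) with hSdef
  have hlS : S.card = l := hl.symm
  set g : Fin l → Fin n := fun i => S.orderEmbOfFin hlS i with hgdef
  have hginj : Function.Injective g := (S.orderEmbOfFin hlS).injective
  have hgS : ∀ i, g i ∈ S := fun i => Finset.orderEmbOfFin_mem S hlS i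
  have hSg : Finset.univ.image g = S := by
    apply Finset.coe_injective
    rw [Finset.coe_image, Finset.coe_univ, Set.image_univ]
    exact Finset.range_orderEmbOfFin S hlS
  set x : Fin n → ℝ := fun j => if (d j)⁻¹ < C then v j else 0 with hxdef
  set y : Fin n → ℝ := fun j => if (d j)⁻¹ < C then 0 else v j with hydef
  have hvxy : v = x + y := funext fun j => by
    by_cases h : (d j)⁻¹ < C <;> simp [hxdef, hydef, h]
  set u : Fin l → ℝ := fun i => v (g i) with hudef
  set B := A.submatrix id g with hBdef
  have hsum : ∀ f : Fin n → ℝ, (∀ j, j ∉ S → f j = 0) → ∑ j, f j = ∑ i, f (g i) := by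
    intro f hf
    rw [← Finset.sum_subset (Finset.subset_univ S) (fun j _ hj => hf j hj),
      ← hSg, Finset.sum_image (fun p _ q _ h => hginj h)]
  have hxg : ∀ i, x (g i) = u i := by
    intro i
    have := hgS i
    rw [hSdef, Finset.mem_filter] at this
    simp [hxdef, hudef, this.2]
  have hxoff : ∀ j, j ∉ S → x j = 0 := by
    intro j hj
    rw [hSdef, Finset.mem_filter] at hj
    simp only [Finset.mem_univ, true_and] at hj
    simp [hxdef, hj]
  have hAx : A.mulVec x = B.mulVec u := by
    funext i
    show (A.mulVec x) i = _
    simp only [Matrix.mulVec, dotProduct, hBdef, Matrix.submatrix_apply, id_eq]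
    rw [hsum (fun j => A i j * x j) (fun j hj => by show A i j * x j = 0; rw [hxoff j hj, mul_zero])]
    exact Finset.sum_congr rfl fun i' _ => by show A i (g i') * x (g i') = B i i' * u i'; rw [hxg, hBdef]; rfl
  have hu2 : u ⬝ᵥ u = x ⬝ᵥ x := by
    simp only [dotProduct]
    rw [hsum (fun j => x j * x j) (fun j hj => by show x j * x j = 0; rw [hxoff j hj, mul_zero])]
    exact Finset.sum_congr rfl fun i' _ => by show u i' * u i' = x (g i') * x (g i'); rw [hxg]
  have hxy0 : x ⬝ᵥ y = 0 := by
    apply Finset.sum_eq_zero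
    intro j _
    by_cases h : (d j)⁻¹ < C <;> simp [hxdef, hydef, h]
  set a2 : ℝ := x ⬝ᵥ x with ha2def
  set b2 : ℝ := y ⬝ᵥ y with hb2def
  have ha2 : 0 ≤ a2 := dot_self_nonneg' x
  have hb2 : 0 ≤ b2 := dot_self_nonneg' y
  have hv2 : v ⬝ᵥ v = a2 + b2 := by
    rw [hvxy, dotProduct_add, add_dotProduct, add_dotProduct,
      hxy0, dotProduct_comm y x, hxy0]
    ring
  have hAvsplit : (A.mulVec v) ⬝ᵥ (A.mulVec v) =
      (A.mulVec x) ⬝ᵥ (A.mulVec x) + 2 * ((A.mulVec x) ⬝ᵥ (A.mulVec y))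
        + (A.mulVec y) ⬝ᵥ (A.mulVec y) := by
    rw [hvxy, Matrix.mulVec_add, dotProduct_add, add_dotProduct,
      add_dotProduct, dotProduct_comm (A.mulVec y) (A.mulVec x)]
    ring
  -- P2 bound on the x-part
  have hmne : (m:ℝ) ≠ 0 := by exact_mod_cast hm.ne'
  have hnne : (n:ℝ) ≠ 0 := by exact_mod_cast hn.ne'
  have hρn : ρ * ((n:ℝ)/m) = 1 := by rw [hρdef]; field_simp
  have hB1 : |(A.mulVec x) ⬝ᵥ (A.mulVec x) - ρ * a2| ≤ ρ * δl * a2 := by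
    have h2 := quad_bound _ (hP2 g hginj) u
    rw [Matrix.sub_mulVec, Matrix.smul_mulVec, Matrix.one_mulVec,
      dotProduct_sub, dotProduct_smul, smul_eq_mul, ← hBdef,
      dot_transpose_mul, hu2] at h2
    have heq : (A.mulVec x) ⬝ᵥ (A.mulVec x) - ρ * a2
        = ρ * (((n:ℝ)/m) * ((B.mulVec u) ⬝ᵥ (B.mulVec u)) - a2) := by
      rw [hAx]
      linear_combination (- ((B.mulVec u) ⬝ᵥ (B.mulVec u))) * hρn
    rw [heq, abs_mul, abs_of_pos hρpos, mul_assoc]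
    exact mul_le_mul_of_nonneg_left h2 hρpos.le
  have hAx2 : (A.mulVec x) ⬝ᵥ (A.mulVec x) ≤ a2 := by
    have h := (abs_le.mp hB1).2
    nlinarith [mul_nonneg (by linarith : (0:ℝ) ≤ 1/2 - ρ) ha2,
      mul_nonneg (mul_nonneg hρpos.le ha2) (by linarith : (0:ℝ) ≤ 1 - δl)]
  -- P1 bound on the y-part
  have hB2 : (A.mulVec y) ⬝ᵥ (A.mulVec y) ≤ (1+δ) * b2 := by
    set w : Fin m → ℝ := A.mulVec y with hwdef
    have hw2 : 0 ≤ w ⬝ᵥ w := dot_self_nonneg' w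
    have hz : w ⬝ᵥ w = (Aᵀ.mulVec w) ⬝ᵥ y := by
      rw [hwdef, Matrix.dotProduct_mulVec, Matrix.mulVec_transpose]
    have hzz : (Aᵀ.mulVec w) ⬝ᵥ (Aᵀ.mulVec w) ≤ (1+δ) * (w ⬝ᵥ w) := by
      have h3 : w ⬝ᵥ ((Aᵀᵀ * Aᵀ).mulVec w) = (Aᵀ.mulVec w) ⬝ᵥ (Aᵀ.mulVec w) :=
        dot_transpose_mul Aᵀ w w
      rw [Matrix.transpose_transpose] at h3
      have h4 := quad_bound _ hP1 w
      rw [Matrix.sub_mulVec, Matrix.one_mulVec, dotProduct_sub, h3] at h4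
      have h5 := (abs_le.mp h4).2
      linarith
    have hcs := dot_cauchy (Aᵀ.mulVec w) y
    have hsq : ((Aᵀ.mulVec w) ⬝ᵥ y)^2 ≤ ((Aᵀ.mulVec w) ⬝ᵥ (Aᵀ.mulVec w)) * b2 := by
      have h6 : |(Aᵀ.mulVec w) ⬝ᵥ y|^2 ≤ (Real.sqrt ((Aᵀ.mulVec w) ⬝ᵥ (Aᵀ.mulVec w))
          * Real.sqrt (y ⬝ᵥ y))^2 := by
        apply pow_le_pow_left₀ (abs_nonneg _) hcs
      rw [sq_abs, mul_pow, Real.sq_sqrt (dot_self_nonneg' _),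
        Real.sq_sqrt (dot_self_nonneg' _)] at h6
      exact h6
    rcases eq_or_lt_of_le hw2 with h0 | h0
    · rw [← h0]
      exact mul_nonneg (by linarith : (0:ℝ) ≤ 1+δ) hb2
    · have h7 : (w ⬝ᵥ w)^2 ≤ ((1+δ) * (w ⬝ᵥ w)) * b2 := by
        calc (w ⬝ᵥ w)^2 = ((Aᵀ.mulVec w) ⬝ᵥ y)^2 := by rw [hz]
        _ ≤ ((Aᵀ.mulVec w) ⬝ᵥ (Aᵀ.mulVec w)) * b2 := hsq
        _ ≤ ((1+δ) * (w ⬝ᵥ w)) * b2 := by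
            apply mul_le_mul_of_nonneg_right hzz hb2
      have := mul_pos h0 h0
      nlinarith
  -- cross term
  have hcross : |(A.mulVec x) ⬝ᵥ (A.mulVec y)|
      ≤ Real.sqrt a2 * (Real.sqrt (1+δ) * Real.sqrt b2) := by
    have h := dot_cauchy (A.mulVec x) (A.mulVec y)
    have h1 : Real.sqrt ((A.mulVec x) ⬝ᵥ (A.mulVec x)) ≤ Real.sqrt a2 :=
      Real.sqrt_le_sqrt hAx2
    have h2 : Real.sqrt ((A.mulVec y) ⬝ᵥ (A.mulVec y)) ≤ Real.sqrt (1+δ) * Real.sqrt b2 := by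
      rw [← Real.sqrt_mul (by linarith : (0:ℝ) ≤ 1+δ)]
      exact Real.sqrt_le_sqrt hB2
    calc |(A.mulVec x) ⬝ᵥ (A.mulVec y)|
        ≤ Real.sqrt ((A.mulVec x) ⬝ᵥ (A.mulVec x))
          * Real.sqrt ((A.mulVec y) ⬝ᵥ (A.mulVec y)) := h
      _ ≤ Real.sqrt a2 * (Real.sqrt (1+δ) * Real.sqrt b2) :=
          mul_le_mul h1 h2 (Real.sqrt_nonneg _) (Real.sqrt_nonneg _)
  -- denominator lower bound
  have hdenlow : ρ * a2 + C * b2 ≤ den := by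
    rw [hden_sum, ha2def, hb2def]
    simp only [dotProduct]
    rw [Finset.mul_sum, Finset.mul_sum, ← Finset.sum_add_distrib]
    apply Finset.sum_le_sum
    intro j _
    by_cases h : (d j)⁻¹ < C
    · simp only [hxdef, hydef, if_pos h]
      have := inv_pos.2 (hd j)
      have := mul_self_nonneg (v j)
      show ρ * (v j * v j) + C * (0 * 0) ≤ ((d j)⁻¹ + ρ) * (v j * v j)
      nlinarith
    · simp only [hxdef, hydef, if_neg h]
      push_neg at h
      have := mul_self_nonneg (v j)
      show ρ * (0 * 0) + C * (v j * v j) ≤ ((d j)⁻¹ + ρ) * (v j * v j)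
      nlinarith
  -- final assembly
  set s : ℝ := Real.sqrt (1 + δ) with hsdef
  have hs2 : s^2 = 1 + δ := Real.sq_sqrt (by linarith)
  have hs1 : 1 ≤ s := by nlinarith [Real.sqrt_nonneg (1 + δ)]
  set L : ℝ := 1 + δ - ρ with hLdef
  have hL : 1/2 ≤ L := by rw [hLdef]; linarith
  set α : ℝ := Real.sqrt a2 with hαdef
  set β : ℝ := Real.sqrt b2 with hβdef
  have hα2 : α^2 = a2 := Real.sq_sqrt ha2
  have hβ2 : β^2 = b2 := Real.sq_sqrt hb2
  have hα0 : 0 ≤ α := Real.sqrt_nonneg _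
  have hβ0 : 0 ≤ β := Real.sqrt_nonneg _
  set Q : ℝ := 1 / 4 * (L + 2 * s) ^ 2 / (ρ * δl * C) with hQdef
  have hQeq : Q * (ρ * δl * C) = (L + 2*s)^2 / 4 := by
    rw [hQdef]
    field_simp
  have hQ0 : 0 ≤ Q := by
    rw [hQdef]
    positivity
  have hkey := key_quadratic ρ δl C s L Q α β hρpos hρhalf hδl0 hδl1.le hC hs1 hL hα0 hβ0 hQeq
  have hNb : |(lam - 1) * den| ≤ ρ*δl*a2 + 2*(α*(s*β)) + L*b2 := by
    rw [hNden, hAvsplit, hv2]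
    have h1 := abs_le.mp hB1
    have h2 := abs_le.mp hcross
    have hq0 := dot_self_nonneg' (A.mulVec y)
    have hLb : L*b2 = (1+δ)*b2 - ρ*b2 := by rw [hLdef]; ring
    have hLρb : ρ*b2 ≤ L*b2 := mul_le_mul_of_nonneg_right (by linarith) hb2
    rw [abs_le]
    constructor
    · linarith [h1.1, h2.1, hB2]
    · linarith [h1.2, h2.2, hB2]
  have hδQ : 0 ≤ δl + Q := by linarith
  have hfinal : |lam - 1| * den ≤ (δl + Q) * den := by
    have e1 : |lam - 1| * den = |(lam - 1) * den| := by
      rw [abs_mul, abs_of_pos hdenpos]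
    have e2 : ρ*δl*α^2 + 2*s*α*β + L*β^2 = ρ*δl*a2 + 2*(α*(s*β)) + L*b2 := by
      rw [hα2, hβ2]
      ring
    have e3 : (δl+Q)*(ρ*α^2 + C*β^2) = (δl+Q)*(ρ*a2 + C*b2) := by
      rw [hα2, hβ2]
    calc |lam - 1| * den = |(lam - 1) * den| := e1
      _ ≤ ρ*δl*a2 + 2*(α*(s*β)) + L*b2 := hNb
      _ = ρ*δl*α^2 + 2*s*α*β + L*β^2 := e2.symm
      _ ≤ (δl+Q)*(ρ*α^2 + C*β^2) := hkey
      _ = (δl+Q)*(ρ*a2 + C*b2) := e3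
      _ ≤ (δl+Q)*den := mul_le_mul_of_nonneg_left hdenlow hδQ
  exact le_of_mul_le_mul_right hfinal hdenpos
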